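/- Real idempotent factorization: every real tensor A ∈ ℝ^{n×n×p} can be written as A = U * E * V, where U, V ∈ ℝ^{n×n×p} are t-invertible and E ∈ ℝ^{n×n×p} is idempotent with respect to the t-product (E * E = E). -/

import Mathlib

open Matrix Complex BigOperators Kronecker

/-- A third-order tensor, represented by its frontal slices (indexed cyclically). -/
abbrev Tensor (F : Type*) (m n p : ℕ) : Type _ :=
  ZMod p → Matrix (Fin m) (Fin n) F

/-- The block-circulant matrix of a tensor: block (i,j) is slice (i - j mod p). -/
def bcirc {F : Type*} {m n p : ℕ} (A : Tensor F m n p) :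
    Matrix (ZMod p × Fin m) (ZMod p × Fin n) F :=
  Matrix.of fun ir jc => A (ir.1 - jc.1) ir.2 jc.2

/-- The t-product of tensors: (A*B)^{(i)} = ∑_j A^{(i-j)} B^{(j)}. -/
def tpr {F : Type*} [CommRing F] {m n l p : ℕ} [NeZero p]
    (A : Tensor F m n p) (B : Tensor F n l p) : Tensor F m l p :=
  fun i => ∑ j : ZMod p, A (i - j) * B j

/-- The identity tensor: first frontal slice is I_n, others are zero. -/
def tId (F : Type*) [CommRing F] (n p : ℕ) [NeZero p] : Tensor F n n p :=
  fun i => if i = 0 then 1 else 0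

/-- Tensor transpose: transpose each slice and reverse the order of slices 2..p. -/
def tT {F : Type*} {m n p : ℕ} (A : Tensor F m n p) : Tensor F n m p :=
  fun i => (A (-i))ᵀ

/-- ξ = e^{-2πi/p}. -/
noncomputable def xi (p : ℕ) : ℂ :=
  Complex.exp (-(2 * Real.pi * Complex.I) / p)

/-- The normalized DFT matrix of order p. -/
noncomputable def Fmat (p : ℕ) : Matrix (ZMod p) (ZMod p) ℂ :=
  Matrix.of fun j k => (1 / (Real.sqrt p : ℂ)) * xi p ^ (j.val * k.val)

/-- The Fourier blocks of a complex tensor: A_i = ∑_k ξ^{(i)(k)} A^{(k)} (0-based). -/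
noncomputable def fblock {m n p : ℕ} [NeZero p] (A : Tensor ℂ m n p) (i : ZMod p) :
    Matrix (Fin m) (Fin n) ℂ :=
  ∑ k : ZMod p, xi p ^ (i.val * k.val) • A k

/-- Complexification of a real tensor. -/
def cplx {m n p : ℕ} (A : Tensor ℝ m n p) : Tensor ℂ m n p :=
  fun i => (A i).map (Complex.ofReal)

/-- Block diagonal matrix with p equal-size blocks. -/
def blockDiag {m n p : ℕ} (M : ZMod p → Matrix (Fin m) (Fin n) ℂ) :
    Matrix (ZMod p × Fin m) (ZMod p × Fin n) ℂ :=
  Matrix.of fun ir jc => if ir.1 = jc.1 then M ir.1 ir.2 jc.2 else 0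

/-- Entrywise conjugation of a complex matrix. -/
def conjM {m n : ℕ} (M : Matrix (Fin m) (Fin n) ℂ) : Matrix (Fin m) (Fin n) ℂ :=
  M.map (starRingEnd ℂ)

/-- A complex matrix is real if all entries have zero imaginary part. -/
def IsRealM {m n : ℕ} (M : Matrix (Fin m) (Fin n) ℂ) : Prop :=
  ∀ r c, (M r c).im = 0

section RootsOfUnity

variable {p : ℕ} [NeZero p]

lemma xi_pow_p : xi p ^ p = 1 := by
  have hp : (p : ℂ) ≠ 0 := Nat.cast_ne_zero.mpr (NeZero.ne p)
  rw [xi, ← Complex.exp_nat_mul]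
  rw [show (p : ℂ) * (-(2 * Real.pi * Complex.I) / p) = -(2 * Real.pi * Complex.I) by
    field_simp]
  rw [Complex.exp_neg, Complex.exp_two_pi_mul_I, inv_one]

lemma xi_pow_mod (a : ℕ) : xi p ^ a = xi p ^ (a % p) := by
  conv_lhs => rw [← Nat.mod_add_div a p, pow_add, pow_mul, xi_pow_p, one_pow, mul_one]

lemma xi_val_mul (a b : ZMod p) : xi p ^ (a.val * b.val) = xi p ^ ((a * b).val) := by
  rw [xi_pow_mod, ZMod.val_mul]

lemma xi_val_add (a b : ZMod p) : xi p ^ ((a + b).val) = xi p ^ a.val * xi p ^ b.val := by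
  rw [ZMod.val_add, ← xi_pow_mod, pow_add]

lemma xi_prim : IsPrimitiveRoot (xi p) p := by
  have h := Complex.isPrimitiveRoot_exp p (NeZero.ne p)
  have : xi p = (Complex.exp (2 * Real.pi * Complex.I / p))⁻¹ := by
    rw [xi, ← Complex.exp_neg, neg_div]
  rw [this]
  exact h.inv

lemma xi_val_eq_one_iff (a : ZMod p) : xi p ^ a.val = 1 ↔ a = 0 := by
  constructor
  · intro h
    have hd := (IsPrimitiveRoot.pow_eq_one_iff_dvd xi_prim a.val).mp h
    have hlt := ZMod.val_lt a
    have hv : a.val = 0 := Nat.eq_zero_of_dvd_of_lt hd hlt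
    exact (ZMod.val_eq_zero a).mp hv
  · rintro rfl
    simp [ZMod.val_zero]

lemma xi_orth (d : ZMod p) :
    ∑ i : ZMod p, xi p ^ ((i * d).val) = if d = 0 then (p : ℂ) else 0 := by
  split_ifs with h
  · subst h
    simp only [mul_zero, ZMod.val_zero, pow_zero]
    simp [ZMod.card]
  · have hne : xi p ^ d.val ≠ 1 := fun hc => h ((xi_val_eq_one_iff d).mp hc)
    have step : ∀ i : ZMod p, xi p ^ ((i * d).val) = (xi p ^ d.val) ^ i.val := by
      intro i
      rw [← xi_val_mul, mul_comm (ZMod.val i), pow_mul]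
    rw [Finset.sum_congr rfl (fun i _ => step i)]
    have hb : ∑ i : ZMod p, (xi p ^ d.val) ^ i.val
        = ∑ j ∈ Finset.range p, (xi p ^ d.val) ^ j := by
      refine Finset.sum_nbij' (fun i => i.val) (fun j => (j : ZMod p)) ?_ ?_ ?_ ?_ ?_
      · intro i _; exact Finset.mem_range.mpr (ZMod.val_lt i)
      · intro j _; exact Finset.mem_univ _
      · intro i _; simp [ZMod.natCast_val, ZMod.cast_id]
      · intro j hj; exact ZMod.val_cast_of_lt (Finset.mem_range.mp hj)
      · intro i _; rfl
    rw [hb]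
    have hgeom := geom_sum_mul (xi p ^ d.val) p
    have hxp : (xi p ^ d.val) ^ p = 1 := by
      rw [← pow_mul, mul_comm, pow_mul, xi_pow_p, one_pow]
    rw [hxp, sub_self] at hgeom
    rcases mul_eq_zero.mp hgeom with h1 | h1
    · exact h1
    · exact absurd (sub_eq_zero.mp h1) hne

lemma xi_conj (a : ZMod p) :
    (starRingEnd ℂ) (xi p ^ a.val) = xi p ^ ((-a).val) := by
  have h1 : xi p ^ a.val * xi p ^ ((-a).val) = 1 := by
    rw [← xi_val_add, add_neg_cancel]
    simp [ZMod.val_zero]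
  have h2 : (starRingEnd ℂ) (xi p) = (xi p)⁻¹ := by
    rw [xi, ← Complex.exp_conj, ← Complex.exp_neg]
    congr 1
    rw [map_div₀, map_neg, _root_.map_mul, _root_.map_mul]
    simp [Complex.conj_I, Complex.conj_ofReal, map_ofNat]
    ring
  rw [map_pow, h2, inv_pow]
  exact (eq_inv_of_mul_eq_one_right h1).symm

end RootsOfUnity

----------------------------------------------------------------

section Fblock

variable {m n l p : ℕ} [NeZero p]

lemma fblock_eq (A : Tensor ℂ m n p) (i : ZMod p) :
    fblock A i = ∑ k : ZMod p, xi p ^ ((i * k).val) • A k :=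
  Finset.sum_congr rfl fun k _ => by rw [xi_val_mul]

lemma fblock_tpr (A : Tensor ℂ m n p) (B : Tensor ℂ n l p) (i : ZMod p) :
    fblock (tpr A B) i = fblock A i * fblock B i := by
  rw [fblock_eq, fblock_eq, fblock_eq]
  unfold tpr
  calc ∑ k : ZMod p, xi p ^ ((i * k).val) • ∑ j : ZMod p, A (k - j) * B j
      = ∑ k : ZMod p, ∑ j : ZMod p, xi p ^ ((i * k).val) • (A (k - j) * B j) := by
        exact Finset.sum_congr rfl fun k _ => Finset.smul_sum
    _ = ∑ j : ZMod p, ∑ k : ZMod p, xi p ^ ((i * k).val) • (A (k - j) * B j) :=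
        Finset.sum_comm
    _ = ∑ j : ZMod p, ∑ a : ZMod p, xi p ^ ((i * (a + j)).val) • (A a * B j) := by
        refine Finset.sum_congr rfl fun j _ => ?_
        refine Fintype.sum_equiv (Equiv.addRight j)
          (fun a => xi p ^ ((i * (a + j)).val) • (A a * B j))
          (fun k => xi p ^ ((i * k).val) • (A (k - j) * B j)) (fun a => ?_) |>.symm
        simp [add_sub_cancel_right]
    _ = ∑ j : ZMod p, ∑ a : ZMod p,
          (xi p ^ ((i * a).val) • A a) * (xi p ^ ((i * j).val) • B j) := by
        refine Finset.sum_congr rfl fun j _ => Finset.sum_congr rfl fun a _ => ?_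
        rw [Matrix.smul_mul, Matrix.mul_smul, smul_smul, mul_add, xi_val_add]
    _ = ∑ a : ZMod p, ∑ j : ZMod p,
          (xi p ^ ((i * a).val) • A a) * (xi p ^ ((i * j).val) • B j) :=
        Finset.sum_comm
    _ = (∑ a : ZMod p, xi p ^ ((i * a).val) • A a) *
          ∑ j : ZMod p, xi p ^ ((i * j).val) • B j := by
        rw [Matrix.sum_mul]
        exact Finset.sum_congr rfl fun a _ => (Matrix.mul_sum _ _ _).symm

lemma fblock_tId (i : ZMod p) : fblock (tId ℂ n p) i = 1 := by
  rw [fblock_eq]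
  unfold tId
  rw [Finset.sum_eq_single 0]
  · simp
  · intro k _ hk; simp [hk]
  · intro h; exact absurd (Finset.mem_univ _) h

noncomputable def ifb (M : ZMod p → Matrix (Fin m) (Fin n) ℂ) (k : ZMod p) :
    Matrix (Fin m) (Fin n) ℂ :=
  (p : ℂ)⁻¹ • ∑ i : ZMod p, xi p ^ ((-(i * k)).val) • M i

lemma hp_ne : ((p : ℂ)) ≠ 0 := Nat.cast_ne_zero.mpr (NeZero.ne p)

lemma ifb_fblock (A : Tensor ℂ m n p) : ifb (fblock A) = A := by
  funext k
  unfold ifb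
  have h1 : ∑ i : ZMod p, xi p ^ ((-(i * k)).val) • fblock A i = (p : ℂ) • A k := by
    calc ∑ i : ZMod p, xi p ^ ((-(i * k)).val) • fblock A i
        = ∑ i : ZMod p, ∑ j : ZMod p,
            (xi p ^ ((-(i * k)).val) * xi p ^ ((i * j).val)) • A j := by
          refine Finset.sum_congr rfl fun i _ => ?_
          rw [fblock_eq, Finset.smul_sum]
          exact Finset.sum_congr rfl fun j _ => by rw [smul_smul]
      _ = ∑ j : ZMod p, (∑ i : ZMod p, xi p ^ ((i * (j - k)).val)) • A j := by
          rw [Finset.sum_comm]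
          refine Finset.sum_congr rfl fun j _ => ?_
          rw [Finset.sum_smul]
          refine Finset.sum_congr rfl fun i _ => ?_
          congr 1
          rw [show i * (j - k) = -(i * k) + i * j by ring, xi_val_add]
      _ = ∑ j : ZMod p, (if j - k = 0 then (p : ℂ) else 0) • A j := by
          exact Finset.sum_congr rfl fun j _ => by rw [xi_orth]
      _ = (p : ℂ) • A k := by
          rw [Finset.sum_eq_single k]
          · simp
          · intro j _ hj
            rw [if_neg (fun hc => hj (sub_eq_zero.mp hc)), zero_smul]
          · intro h; exact absurd (Finset.mem_univ _) h
  rw [h1, smul_smul, inv_mul_cancel₀ hp_ne, one_smul]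

lemma fblock_ifb (M : ZMod p → Matrix (Fin m) (Fin n) ℂ) : fblock (ifb M) = M := by
  funext i
  rw [fblock_eq]
  unfold ifb
  have h1 : ∀ k : ZMod p, xi p ^ ((i * k).val) •
      ((p : ℂ)⁻¹ • ∑ j : ZMod p, xi p ^ ((-(j * k)).val) • M j)
      = (p : ℂ)⁻¹ • ∑ j : ZMod p,
          (xi p ^ ((i * k).val) * xi p ^ ((-(j * k)).val)) • M j := by
    intro k
    rw [smul_comm, Finset.smul_sum]
    congr 1
    exact Finset.sum_congr rfl fun j _ => by rw [smul_smul]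
  rw [Finset.sum_congr rfl fun k _ => h1 k, ← Finset.smul_sum]
  have h2 : ∑ k : ZMod p, ∑ j : ZMod p,
      (xi p ^ ((i * k).val) * xi p ^ ((-(j * k)).val)) • M j = (p : ℂ) • M i := by
    calc ∑ k : ZMod p, ∑ j : ZMod p,
        (xi p ^ ((i * k).val) * xi p ^ ((-(j * k)).val)) • M j
        = ∑ j : ZMod p, (∑ k : ZMod p, xi p ^ ((k * (i - j)).val)) • M j := by
          rw [Finset.sum_comm]
          refine Finset.sum_congr rfl fun j _ => ?_
          rw [Finset.sum_smul]
          refine Finset.sum_congr rfl fun k _ => ?_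
          congr 1
          rw [show k * (i - j) = i * k + -(j * k) by ring, xi_val_add]
      _ = ∑ j : ZMod p, (if i - j = 0 then (p : ℂ) else 0) • M j := by
          exact Finset.sum_congr rfl fun j _ => by rw [xi_orth]
      _ = (p : ℂ) • M i := by
          rw [Finset.sum_eq_single i]
          · simp
          · intro j _ hj
            rw [if_neg (fun hc => hj (sub_eq_zero.mp hc).symm), zero_smul]
          · intro h; exact absurd (Finset.mem_univ _) h
  rw [h2, smul_smul, inv_mul_cancel₀ hp_ne, one_smul]

end Fblock

----------------------------------------------------------------

section Conj

variable {m n l p : ℕ} [NeZero p]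

lemma conjM_mul (X : Matrix (Fin m) (Fin n) ℂ) (Y : Matrix (Fin n) (Fin l) ℂ) :
    conjM (X * Y) = conjM X * conjM Y := by
  unfold conjM
  exact Matrix.map_mul

lemma conjM_one : conjM (1 : Matrix (Fin n) (Fin n) ℂ) = 1 := by
  unfold conjM
  exact Matrix.map_one _ (map_zero _) (map_one _)

lemma conjM_conjM (X : Matrix (Fin m) (Fin n) ℂ) : conjM (conjM X) = X := by
  ext r c; simp [conjM]

lemma conjM_smul (c : ℂ) (X : Matrix (Fin m) (Fin n) ℂ) :
    conjM (c • X) = (starRingEnd ℂ) c • conjM X := by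
  ext r c'; simp [conjM]

lemma conjM_sum {ι : Type*} (s : Finset ι) (f : ι → Matrix (Fin m) (Fin n) ℂ) :
    conjM (∑ i ∈ s, f i) = ∑ i ∈ s, conjM (f i) := by
  ext r c
  simp only [conjM, Matrix.map_apply, Matrix.sum_apply, map_sum]

lemma conjM_map_ofReal (X : Matrix (Fin m) (Fin n) ℝ) :
    conjM (X.map Complex.ofReal) = X.map Complex.ofReal := by
  ext r c; simp [conjM, Complex.conj_ofReal]

lemma isRealM_of_conj {X : Matrix (Fin m) (Fin n) ℂ} (h : conjM X = X) : IsRealM X := by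
  intro r c
  have := congrFun (congrFun h r) c
  simpa [conjM] using Complex.conj_eq_iff_im.mp this

lemma map_re_ofReal {X : Matrix (Fin m) (Fin n) ℂ} (h : IsRealM X) :
    (X.map Complex.re).map Complex.ofReal = X := by
  ext r c
  apply Complex.ext <;> simp [h r c]

lemma xi_conj_neg (a : ZMod p) :
    (starRingEnd ℂ) (xi p ^ ((-(a : ZMod p)).val)) = xi p ^ a.val := by
  rw [xi_conj, neg_neg]

lemma ifb_isReal {M : ZMod p → Matrix (Fin m) (Fin n) ℂ}
    (hs : ∀ i, conjM (M i) = M (-i)) (k : ZMod p) : IsRealM (ifb M k) := by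
  apply isRealM_of_conj
  unfold ifb
  rw [conjM_smul, conjM_sum]
  have hco : (starRingEnd ℂ) ((p : ℂ))⁻¹ = ((p : ℂ))⁻¹ := by
    rw [map_inv₀, Complex.conj_natCast]
  rw [hco]
  congr 1
  calc ∑ i : ZMod p, conjM (xi p ^ ((-(i * k)).val) • M i)
      = ∑ i : ZMod p, xi p ^ ((i * k).val) • M (-i) := by
        refine Finset.sum_congr rfl fun i _ => ?_
        rw [conjM_smul, hs i, xi_conj_neg]
    _ = ∑ i : ZMod p, xi p ^ ((-(i * k)).val) • M i := by
        refine Fintype.sum_equiv (Equiv.neg (ZMod p))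
          (fun i => xi p ^ ((i * k).val) • M (-i))
          (fun i => xi p ^ ((-(i * k)).val) • M i) (fun x => ?_)
        simp only [Equiv.neg_apply, neg_mul, neg_neg]

lemma fblock_cplx_symm (A : Tensor ℝ m n p) (i : ZMod p) :
    conjM (fblock (cplx A) i) = fblock (cplx A) (-i) := by
  rw [fblock_eq, fblock_eq, conjM_sum]
  refine Finset.sum_congr rfl fun k _ => ?_
  rw [conjM_smul, xi_conj]
  unfold cplx
  rw [conjM_map_ofReal, neg_mul]

lemma cplx_tpr (A : Tensor ℝ m n p) (B : Tensor ℝ n l p) :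
    cplx (tpr A B) = tpr (cplx A) (cplx B) := by
  funext i
  ext r c
  simp only [cplx, tpr, Matrix.map_apply, Matrix.sum_apply, Matrix.mul_apply]
  push_cast
  rfl

lemma cplx_tId : cplx (tId ℝ n p) = tId ℂ n p := by
  funext i
  unfold cplx tId
  split_ifs
  · exact Matrix.map_one _ (by simp) (by simp)
  · exact Matrix.map_zero _ (by simp)

lemma cplx_injective : Function.Injective (cplx (m := m) (n := n) (p := p)) := by
  intro X Y h
  funext i
  ext r c
  have := congrFun (congrFun (congrFun h i) r) c
  simpa [cplx] using this

lemma tensor_eq_of_fblock {X Y : Tensor ℝ m n p}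
    (h : ∀ i, fblock (cplx X) i = fblock (cplx Y) i) : X = Y := by
  apply cplx_injective
  have h2 := congrArg ifb (funext h : fblock (cplx X) = fblock (cplx Y))
  rwa [ifb_fblock, ifb_fblock] at h2

def reT {m n p : ℕ} (M : ZMod p → Matrix (Fin m) (Fin n) ℂ) : Tensor ℝ m n p :=
  fun k => (M k).map Complex.re

lemma cplx_reT {M : ZMod p → Matrix (Fin m) (Fin n) ℂ} (h : ∀ k, IsRealM (M k)) :
    cplx (reT M) = M := by
  funext k
  exact map_re_ofReal (h k)

end Conj

----------------------------------------------------------------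

lemma matrix_unit_idem {K : Type*} [Field K] {n : ℕ} (M : Matrix (Fin n) (Fin n) K) :
    ∃ P Pinv Q : Matrix (Fin n) (Fin n) K,
      P * Pinv = 1 ∧ Pinv * P = 1 ∧ Q * Q = Q ∧ M = P * Q := by
  set f : (Fin n → K) →ₗ[K] (Fin n → K) := Matrix.toLin' M with hf
  obtain ⟨C, hC⟩ := (LinearMap.ker f).exists_isCompl
  set pr := C.projectionOnto (LinearMap.ker f) hC.symm with hpr
  set e : (Fin n → K) →ₗ[K] (Fin n → K) := C.subtype ∘ₗ pr with he
  have hee : e ∘ₗ e = e := by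
    apply LinearMap.ext; intro x
    simp [he, hpr, Submodule.projectionOnto_apply_left]
  have hfe : ∀ x, f (e x) = f x := by
    intro x
    have h1 := Submodule.projection_add_projection_eq_self hC.symm x
    have h2 : x - e x ∈ LinearMap.ker f := by
      have hx : ((LinearMap.ker f).linearProjOfIsCompl C hC.symm.symm x : Fin n → K)
          = x - e x := eq_sub_of_add_eq' h1
      rw [← hx]; exact Submodule.coe_mem _
    have h3 : f x - f (e x) = 0 := by rw [← map_sub]; exact h2
    exact (sub_eq_zero.mp h3).symm
  obtain ⟨D, hD⟩ := (LinearMap.range f).exists_isCompl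
  have hdim : Module.finrank K (LinearMap.ker f) = Module.finrank K D := by
    have h4 := Submodule.finrank_add_eq_of_isCompl hD
    have h5 := LinearMap.finrank_range_add_finrank_ker f
    omega
  obtain ⟨eK⟩ := FiniteDimensional.nonempty_linearEquiv_of_finrank_eq hdim
  set eC : C ≃ₗ[K] LinearMap.range f :=
    (Submodule.quotientEquivOfIsCompl (LinearMap.ker f) C hC).symm.trans f.quotKerEquivRange
    with heC
  have heCval : ∀ c : C, (eC c : Fin n → K) = f c := by
    intro c
    simp [heC, Submodule.quotientEquivOfIsCompl_symm_apply,
      LinearMap.quotKerEquivRange_apply_mk]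
  set u : (Fin n → K) ≃ₗ[K] (Fin n → K) :=
    ((Submodule.prodEquivOfIsCompl C (LinearMap.ker f) hC.symm).symm.trans
      (eC.prodCongr eK)).trans (Submodule.prodEquivOfIsCompl (LinearMap.range f) D hD) with hu
  have key : ∀ x, u (e x) = f x := by
    intro x
    have hex : e x = ((pr x : C) : Fin n → K) := rfl
    rw [hex]
    simp only [hu, LinearEquiv.trans_apply, Submodule.prodEquivOfIsCompl_symm_apply_left,
      LinearEquiv.prodCongr_apply, Submodule.coe_prodEquivOfIsCompl']
    rw [eK.map_zero]; simp only [Submodule.coe_zero, add_zero]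
    rw [heCval]
    exact hfe x
  refine ⟨LinearMap.toMatrix' u.toLinearMap, LinearMap.toMatrix' u.symm.toLinearMap,
    LinearMap.toMatrix' e, ?_, ?_, ?_, ?_⟩
  · rw [← LinearMap.toMatrix'_comp, ← LinearMap.toMatrix'_id (R := K) (n := Fin n)]
    congr 1
    apply LinearMap.ext; intro x
    simp
  · rw [← LinearMap.toMatrix'_comp, ← LinearMap.toMatrix'_id (R := K) (n := Fin n)]
    congr 1
    apply LinearMap.ext; intro x
    simp
  · rw [← LinearMap.toMatrix'_comp, hee]
  · rw [← LinearMap.toMatrix'_comp]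
    have : u.toLinearMap ∘ₗ e = f := LinearMap.ext key
    rw [this, hf, LinearMap.toMatrix'_toLin']

section SymmFact

variable {n p : ℕ} [NeZero p]

lemma exists_symm_fact (M : ZMod p → Matrix (Fin n) (Fin n) ℂ)
    (hs : ∀ i, conjM (M i) = M (-i)) :
    ∃ P Pinv Q : ZMod p → Matrix (Fin n) (Fin n) ℂ,
      (∀ i, P i * Pinv i = 1) ∧ (∀ i, Pinv i * P i = 1) ∧ (∀ i, Q i * Q i = Q i) ∧
      (∀ i, M i = P i * Q i) ∧
      (∀ i, conjM (P i) = P (-i)) ∧ (∀ i, conjM (Pinv i) = Pinv (-i)) ∧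
      (∀ i, conjM (Q i) = Q (-i)) := by
  choose cP cPi cQ hc1 hc2 hc3 hc4 using
    fun i : ZMod p => matrix_unit_idem (K := ℂ) (M i)
  choose rP rPi rQ hr1 hr2 hr3 hr4 using
    fun i : ZMod p => matrix_unit_idem (K := ℝ) ((M i).map Complex.re)
  classical
  set pick : (ZMod p → Matrix (Fin n) (Fin n) ℂ) → (ZMod p → Matrix (Fin n) (Fin n) ℝ) →
      ZMod p → Matrix (Fin n) (Fin n) ℂ :=
    fun c r i =>
      if i.val < (-i).val then c i
      else if (-i).val < i.val then conjM (c (-i))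
      else (r i).map Complex.ofReal with hpick
  have hmid : ∀ i : ZMod p, ¬ i.val < (-i).val → ¬ (-i).val < i.val → i = -i := by
    intro i h1 h2
    exact ZMod.val_injective p (le_antisymm (le_of_not_gt h2) (le_of_not_gt h1))
  have hreal : ∀ i : ZMod p, i = -i → IsRealM (M i) := by
    intro i h
    apply isRealM_of_conj
    rw [hs i, ← h]
  -- map of real factorization
  have hmap_mul : ∀ (X Y : Matrix (Fin n) (Fin n) ℝ),
      (X * Y).map Complex.ofReal = X.map Complex.ofReal * Y.map Complex.ofReal := by
    intro X Y
    exact Matrix.map_mul (f := Complex.ofRealHom)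
  have hmap_one : ((1 : Matrix (Fin n) (Fin n) ℝ)).map Complex.ofReal = 1 :=
    Matrix.map_one _ (by simp) (by simp)
  refine ⟨pick cP rP, pick cPi rPi, pick cQ rQ, ?_, ?_, ?_, ?_, ?_, ?_, ?_⟩
  · intro i
    simp only [hpick]
    split_ifs with h1 h2
    · exact hc1 i
    · rw [← conjM_mul, hc1 (-i), conjM_one]
    · rw [← hmap_mul, hr1 i, hmap_one]
  · intro i
    simp only [hpick]
    split_ifs with h1 h2
    · exact hc2 i
    · rw [← conjM_mul, hc2 (-i), conjM_one]
    · rw [← hmap_mul, hr2 i, hmap_one]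
  · intro i
    simp only [hpick]
    split_ifs with h1 h2
    · exact hc3 i
    · rw [← conjM_mul, hc3 (-i)]
    · rw [← hmap_mul, hr3 i]
  · intro i
    simp only [hpick]
    split_ifs with h1 h2
    · exact hc4 i
    · have := congrArg conjM (hc4 (-i))
      rw [conjM_mul] at this
      rw [← this]
      rw [hs (-i), neg_neg]
    · rw [← hmap_mul, ← hr4 i]
      exact (map_re_ofReal (hreal i (hmid i h1 h2))).symm
  · intro i
    simp only [hpick]
    rcases lt_trichotomy i.val (-i).val with h | h | h
    · rw [if_pos h, if_neg (by rw [neg_neg]; omega), if_pos (by rw [neg_neg]; omega), neg_neg]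
    · have hi : i = -i := ZMod.val_injective p h
      rw [← hi, if_neg (by omega), if_neg (by omega), if_neg (by omega), if_neg (by omega)]
      exact conjM_map_ofReal _
    · rw [if_neg (by omega), if_pos h, if_pos (by rw [neg_neg]; omega), conjM_conjM]
  · intro i
    simp only [hpick]
    rcases lt_trichotomy i.val (-i).val with h | h | h
    · rw [if_pos h, if_neg (by rw [neg_neg]; omega), if_pos (by rw [neg_neg]; omega), neg_neg]
    · have hi : i = -i := ZMod.val_injective p h
      rw [← hi, if_neg (by omega), if_neg (by omega), if_neg (by omega), if_neg (by omega)]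
      exact conjM_map_ofReal _
    · rw [if_neg (by omega), if_pos h, if_pos (by rw [neg_neg]; omega), conjM_conjM]
  · intro i
    simp only [hpick]
    rcases lt_trichotomy i.val (-i).val with h | h | h
    · rw [if_pos h, if_neg (by rw [neg_neg]; omega), if_pos (by rw [neg_neg]; omega), neg_neg]
    · have hi : i = -i := ZMod.val_injective p h
      rw [← hi, if_neg (by omega), if_neg (by omega), if_neg (by omega), if_neg (by omega)]
      exact conjM_map_ofReal _
    · rw [if_neg (by omega), if_pos h, if_pos (by rw [neg_neg]; omega), conjM_conjM]

end SymmFact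

theorem stmt10 {n p : ℕ} [NeZero p] (A : Tensor ℝ n n p) :
    ∃ U Uinv V Vinv E : Tensor ℝ n n p,
      tpr U Uinv = tId ℝ n p ∧ tpr Uinv U = tId ℝ n p ∧
      tpr V Vinv = tId ℝ n p ∧ tpr Vinv V = tId ℝ n p ∧
      tpr E E = E ∧
      A = tpr U (tpr E V) := by
  classical
  obtain ⟨P, Pinv, Q, h1, h2, h3, h4, s1, s2, s3⟩ :=
    exists_symm_fact (fun i => fblock (cplx A) i) (fun i => fblock_cplx_symm A i)
  have hU : fblock (cplx (reT (ifb P))) = P := by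
    rw [cplx_reT (ifb_isReal s1), fblock_ifb]
  have hUinv : fblock (cplx (reT (ifb Pinv))) = Pinv := by
    rw [cplx_reT (ifb_isReal s2), fblock_ifb]
  have hE : fblock (cplx (reT (ifb Q))) = Q := by
    rw [cplx_reT (ifb_isReal s3), fblock_ifb]
  refine ⟨reT (ifb P), reT (ifb Pinv), tId ℝ n p, tId ℝ n p, reT (ifb Q),
    ?_, ?_, ?_, ?_, ?_, ?_⟩
  · apply tensor_eq_of_fblock; intro i
    rw [cplx_tpr, fblock_tpr, congrFun hU i, congrFun hUinv i, h1 i, cplx_tId, fblock_tId]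
  · apply tensor_eq_of_fblock; intro i
    rw [cplx_tpr, fblock_tpr, congrFun hU i, congrFun hUinv i, h2 i, cplx_tId, fblock_tId]
  · apply tensor_eq_of_fblock; intro i
    rw [cplx_tpr, fblock_tpr, cplx_tId, fblock_tId, one_mul]
  · apply tensor_eq_of_fblock; intro i
    rw [cplx_tpr, fblock_tpr, cplx_tId, fblock_tId, one_mul]
  · apply tensor_eq_of_fblock; intro i
    rw [cplx_tpr, fblock_tpr, congrFun hE i]
    exact h3 i
  · apply tensor_eq_of_fblock; intro i
    rw [cplx_tpr, fblock_tpr, cplx_tpr, fblock_tpr, cplx_tId, fblock_tId, mul_one,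
      congrFun hU i, congrFun hE i]
    exact h4 i
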